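/- arXiv:0808.1430 — 2 statements merged into one kernel-verified Lean document; each statement's English description precedes it below -/
import Mathlib

section
/- Let G be a Garside group of finite type and x, α ∈ G with inf(x^α) ≤ inf(x) and sup(x^α) ≥ sup(x). If α is positive (α ∈ P), then the transport α^{(1)} = 𝔭(x)⁻¹ α 𝔭(x^α) is positive. -/
namespace GarsidePaper

/-- A Garside structure of finite type on a group `G`: a positive submonoid `P` with
`P ∩ P⁻¹ = {1}`, a Garside element `Δ ∈ P`, the prefix order `a ≼ b ↔ a⁻¹b ∈ P`
a lattice order (with meet `wedge` and join `vee`), the simple elements `[1,Δ]`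
generating `G` and being finite, `Δ⁻¹PΔ = P`, a finite norm on positive elements,
and the infimum and supremum functions `inf`, `sup` characterised by
`Δ^(inf x) ≼ x ≼ Δ^(sup x)` with `inf x` maximal and `sup x` minimal. -/
structure Garside (G : Type*) [Group G] where
  P : Submonoid G
  Δ : G
  purity : ∀ a : G, a ∈ P → a⁻¹ ∈ P → a = 1
  delta_mem : Δ ∈ P
  wedge : G → G → G
  vee : G → G → G
  wedge_le_left : ∀ a b : G, (wedge a b)⁻¹ * a ∈ P
  wedge_le_right : ∀ a b : G, (wedge a b)⁻¹ * b ∈ P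
  le_wedge : ∀ a b c : G, c⁻¹ * a ∈ P → c⁻¹ * b ∈ P → c⁻¹ * wedge a b ∈ P
  le_vee_left : ∀ a b : G, a⁻¹ * vee a b ∈ P
  le_vee_right : ∀ a b : G, b⁻¹ * vee a b ∈ P
  vee_le : ∀ a b c : G, a⁻¹ * c ∈ P → b⁻¹ * c ∈ P → (vee a b)⁻¹ * c ∈ P
  simples_generate : Subgroup.closure {a : G | a ∈ P ∧ a⁻¹ * Δ ∈ P} = (⊤ : Subgroup G)
  conj_pos : ∀ a : G, a ∈ P → Δ⁻¹ * a * Δ ∈ P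
  norm : G → ℕ
  norm_exists : ∀ x : G, x ∈ P → x ≠ 1 →
    ∃ l : List G, (∀ s ∈ l, s ∈ P ∧ s ≠ 1) ∧ l.prod = x ∧ l.length = norm x
  norm_max : ∀ x : G, x ∈ P → x ≠ 1 →
    ∀ l : List G, (∀ s ∈ l, s ∈ P ∧ s ≠ 1) → l.prod = x → l.length ≤ norm x
  simples_finite : Set.Finite {a : G | a ∈ P ∧ a⁻¹ * Δ ∈ P}
  inf : G → ℤ
  sup : G → ℤ
  inf_le : ∀ x : G, (Δ ^ inf x)⁻¹ * x ∈ P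
  inf_max : ∀ (x : G) (p : ℤ), (Δ ^ p)⁻¹ * x ∈ P → p ≤ inf x
  le_sup : ∀ x : G, x⁻¹ * Δ ^ sup x ∈ P
  sup_min : ∀ (x : G) (q : ℤ), x⁻¹ * Δ ^ q ∈ P → sup x ≤ q

namespace Garside

variable {G : Type*} [Group G]

/-- The prefix order `a ≼ b`. -/
def le (S : Garside G) (a b : G) : Prop := a⁻¹ * b ∈ S.P

/-- The canonical length `ℓ(x) = sup(x) - inf(x)`. -/
def len (S : Garside G) (x : G) : ℤ := S.sup x - S.inf x

/-- The initial factor `ι(x) = (x Δ^(-inf x)) ∧ Δ`. -/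
def iota (S : Garside G) (x : G) : G := S.wedge (x * S.Δ ^ (-S.inf x)) S.Δ

/-- The preferred prefix `𝔭(x) = ι(x) ∧ ι(x⁻¹)`. -/
def pp (S : Garside G) (x : G) : G := S.wedge (S.iota x) (S.iota x⁻¹)

/-- Cyclic sliding `𝔰(x) = 𝔭(x)⁻¹ x 𝔭(x)`. -/
def sl (S : Garside G) (x : G) : G := (S.pp x)⁻¹ * x * S.pp x

/-- The final factor `φ(x) = (Δ^(sup x - 1) ∧ x)⁻¹ x`. -/
def phi (S : Garside G) (x : G) : G := (S.wedge (S.Δ ^ (S.sup x - 1)) x)⁻¹ * x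

/-- Conjugation by `Δ`: `τ(x) = Δ⁻¹ x Δ`. -/
def tau (S : Garside G) (x : G) : G := S.Δ⁻¹ * x * S.Δ

/-- Cycling `c(x) = ι(x)⁻¹ x ι(x)`. -/
def cyc (S : Garside G) (x : G) : G := (S.iota x)⁻¹ * x * S.iota x

/-- Decycling `d(x) = φ(x) x φ(x)⁻¹`. -/
def dec (S : Garside G) (x : G) : G := S.phi x * x * (S.phi x)⁻¹

/-- The transport `α^{(1)} = 𝔭(x)⁻¹ α 𝔭(x^α)` of `α` at `x`. -/
def transport (S : Garside G) (x α : G) : G := (S.pp x)⁻¹ * α * S.pp (α⁻¹ * x * α)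

/-- The iterated transport: `itTransport x i α = α^{(i)}`, the transport of `α^{(i-1)}`
at `𝔰^{i-1}(x)`, with `α^{(0)} = α`. -/
def itTransport (S : Garside G) (x : G) : ℕ → G → G
  | 0, α => α
  | i + 1, α => S.transport ((S.sl)^[i] x) (S.itTransport x i α)

/-- `𝔓_i(x) = 𝔭(x) 𝔭(𝔰(x)) ⋯ 𝔭(𝔰^{i-1}(x))`, with `𝔓₀(x) = 1`. -/
def PP (S : Garside G) (x : G) : ℕ → G
  | 0 => 1
  | i + 1 => S.PP x i * S.pp ((S.sl)^[i] x)

/-- The summit set `SS(x)`. -/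
def SS (S : Garside G) (x : G) : Set G :=
  {y | IsConj x y ∧ ∀ z : G, IsConj x z → S.inf z ≤ S.inf y}

/-- The super summit set `SSS(x)`. -/
def SSS (S : Garside G) (x : G) : Set G :=
  {y | IsConj x y ∧ (∀ z : G, IsConj x z → S.inf z ≤ S.inf y) ∧
       (∀ z : G, IsConj x z → S.sup y ≤ S.sup z)}

/-- The ultra summit set `USS(x)`. -/
def USS (S : Garside G) (x : G) : Set G :=
  {y | y ∈ S.SSS x ∧ ∃ m : ℕ, 1 ≤ m ∧ (S.cyc)^[m] y = y}

/-- The reduced super summit set `RSSS(x)`. -/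
def RSSS (S : Garside G) (x : G) : Set G :=
  {y | IsConj x y ∧ (∃ m : ℕ, 1 ≤ m ∧ (S.cyc)^[m] y = y) ∧
       (∃ n : ℕ, 1 ≤ n ∧ (S.dec)^[n] y = y)}

/-- The set of sliding circuits `SC(x)`. -/
def SC (S : Garside G) (x : G) : Set G :=
  {y | IsConj x y ∧ ∃ m : ℕ, 1 ≤ m ∧ (S.sl)^[m] y = y}

end Garside

namespace Garside

section Aux

variable {G : Type*} [Group G] (S : Garside G)

/-- The set of simple elements. -/
def Simples : Set G := {a : G | a ∈ S.P ∧ a⁻¹ * S.Δ ∈ S.P}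

/-- The submonoid generated by the simples. -/
def Qm : Submonoid G := Submonoid.closure S.Simples

lemma simples_subset_P : S.Simples ⊆ S.P := fun _ h => h.1

lemma Qm_le_P : S.Qm ≤ S.P := Submonoid.closure_le.mpr (S.simples_subset_P)

lemma delta_mem_simples : S.Δ ∈ S.Simples :=
  ⟨S.delta_mem, by simpa using S.P.one_mem⟩

lemma pow_delta_mem (n : ℕ) : S.Δ ^ n ∈ S.P := pow_mem S.delta_mem n

lemma zpow_delta_mem {m : ℤ} (hm : 0 ≤ m) : S.Δ ^ m ∈ S.P := by
  obtain ⟨n, rfl⟩ := Int.eq_ofNat_of_zero_le hm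
  rw [zpow_natCast]
  exact S.pow_delta_mem n

lemma mul_div_mem {a b c : G} (h1 : a⁻¹ * b ∈ S.P) (h2 : b⁻¹ * c ∈ S.P) :
    a⁻¹ * c ∈ S.P := by
  have := S.P.mul_mem h1 h2
  convert this using 1
  group

lemma tau_mem_simples {a : G} (h : a ∈ S.Simples) : S.Δ⁻¹ * a * S.Δ ∈ S.Simples := by
  refine ⟨S.conj_pos a h.1, ?_⟩
  have := S.conj_pos _ h.2
  convert this using 1
  group

lemma compl_mem_simples {s : G} (h : s ∈ S.Simples) : s⁻¹ * S.Δ ∈ S.Simples := by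
  refine ⟨h.2, ?_⟩
  have := S.conj_pos s h.1
  convert this using 1
  group

lemma psi_mem_simples {b : G} (h : b ∈ S.Simples) : S.Δ * b * S.Δ⁻¹ ∈ S.Simples := by
  have hm : Set.MapsTo (fun a => S.Δ⁻¹ * a * S.Δ) S.Simples S.Simples :=
    fun a ha => S.tau_mem_simples ha
  have hinj : Set.InjOn (fun a => S.Δ⁻¹ * a * S.Δ) S.Simples := by
    intro a _ b _ hab
    exact mul_left_cancel (mul_right_cancel hab)
  have hfin : (S.Simples).Finite := S.simples_finite
  have hbij := (hfin.injOn_iff_bijOn_of_mapsTo hm).mp hinj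
  obtain ⟨a, ha, hab⟩ := hbij.surjOn h
  have hba : S.Δ * b * S.Δ⁻¹ = a := by
    simp only at hab
    rw [← hab]; group
  rw [hba]; exact ha

lemma tau_mem_Qm {q : G} (h : q ∈ S.Qm) : S.Δ⁻¹ * q * S.Δ ∈ S.Qm := by
  obtain ⟨l, hl, rfl⟩ := Submonoid.exists_list_of_mem_closure h
  clear h
  induction l with
  | nil => simpa using S.Qm.one_mem
  | cons s t ih =>
    have hs : S.Δ⁻¹ * s * S.Δ ∈ S.Qm :=
      Submonoid.subset_closure (S.tau_mem_simples (hl s (by simp)))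
    have ht := ih (fun a ha => hl a (by simp [ha]))
    have := S.Qm.mul_mem hs ht
    convert this using 1
    rw [List.prod_cons]
    group

lemma psi_mem_Qm {q : G} (h : q ∈ S.Qm) : S.Δ * q * S.Δ⁻¹ ∈ S.Qm := by
  obtain ⟨l, hl, rfl⟩ := Submonoid.exists_list_of_mem_closure h
  clear h
  induction l with
  | nil => simpa using S.Qm.one_mem
  | cons s t ih =>
    have hs : S.Δ * s * S.Δ⁻¹ ∈ S.Qm :=
      Submonoid.subset_closure (S.psi_mem_simples (hl s (by simp)))
    have ht := ih (fun a ha => hl a (by simp [ha]))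
    have := S.Qm.mul_mem hs ht
    convert this using 1
    rw [List.prod_cons]
    group

lemma tau_pow_mem_simples (n : ℕ) {a : G} (h : a ∈ S.Simples) :
    (S.Δ ^ n)⁻¹ * a * S.Δ ^ n ∈ S.Simples := by
  induction n with
  | zero => simpa using h
  | succ n ih =>
    have := S.tau_mem_simples ih
    convert this using 1
    rw [pow_succ]
    group

lemma tau_pow_mem_Qm (n : ℕ) {q : G} (h : q ∈ S.Qm) :
    (S.Δ ^ n)⁻¹ * q * S.Δ ^ n ∈ S.Qm := by
  induction n with
  | zero => simpa using h
  | succ n ih =>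
    have := S.tau_mem_Qm ih
    convert this using 1
    rw [pow_succ]
    group

lemma prod_mem_Qm {l : List G} (hl : ∀ s ∈ l, s ∈ S.Simples) : l.prod ∈ S.Qm :=
  list_prod_mem (fun a ha => Submonoid.subset_closure (hl a ha))

lemma prod_mem_P {l : List G} (hl : ∀ s ∈ l, s ∈ S.Simples) : l.prod ∈ S.P :=
  S.Qm_le_P (S.prod_mem_Qm hl)

lemma inv_mul_delta_pow_mem_Qm :
    ∀ l : List G, (∀ s ∈ l, s ∈ S.Simples) → ∃ m : ℕ, (l.prod)⁻¹ * S.Δ ^ m ∈ S.Qm := by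
  intro l
  induction l with
  | nil => exact fun _ => ⟨0, by simpa using S.Qm.one_mem⟩
  | cons s t ih =>
    intro hl
    obtain ⟨m, hm⟩ := ih (fun a ha => hl a (by simp [ha]))
    refine ⟨m + 1, ?_⟩
    have h1 : (S.Δ ^ m)⁻¹ * (s⁻¹ * S.Δ) * S.Δ ^ m ∈ S.Qm :=
      Submonoid.subset_closure (S.tau_pow_mem_simples m (S.compl_mem_simples (hl s (by simp))))
    have := S.Qm.mul_mem hm h1
    convert this using 1
    rw [List.prod_cons, pow_succ']
    group

lemma exists_mul_delta_pow_mem_Qm (g : G) : ∃ k : ℕ, g * S.Δ ^ k ∈ S.Qm := by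
  let H : Subgroup G :=
    { carrier := {g : G | ∃ k : ℕ, g * S.Δ ^ k ∈ S.Qm}
      one_mem' := ⟨0, by simpa using S.Qm.one_mem⟩
      mul_mem' := by
        rintro a b ⟨k, hk⟩ ⟨m, hm⟩
        refine ⟨k + m, ?_⟩
        have h2 := S.tau_pow_mem_Qm k hm
        have := S.Qm.mul_mem hk h2
        convert this using 1
        rw [pow_add]
        group
      inv_mem' := by
        rintro a ⟨k, hk⟩
        obtain ⟨l, hl, hprod⟩ := Submonoid.exists_list_of_mem_closure hk
        obtain ⟨m, hm⟩ := S.inv_mul_delta_pow_mem_Qm l hl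
        rw [hprod] at hm
        refine ⟨m, ?_⟩
        have hdk : (S.Δ : G) ^ k ∈ S.Qm :=
          pow_mem (Submonoid.subset_closure S.delta_mem_simples) k
        have := S.Qm.mul_mem hdk hm
        convert this using 1
        group }
  have hle : Subgroup.closure {a : G | a ∈ S.P ∧ a⁻¹ * S.Δ ∈ S.P} ≤ H :=
    (Subgroup.closure_le H).mpr (fun s hs => ⟨0, by simp only [pow_zero, mul_one]; exact Submonoid.subset_closure hs⟩)
  rw [S.simples_generate] at hle
  exact hle (Subgroup.mem_top g)

lemma simple_compl_mem_Qm :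
    ∀ l : List G, (∀ s ∈ l, s ∈ S.Simples) →
      ∀ u ∈ S.Simples, u⁻¹ * l.prod ∈ S.P → u⁻¹ * l.prod ∈ S.Qm := by
  intro l
  induction l with
  | nil =>
    intro _ u hu hP
    have hu1 : u = 1 := S.purity u hu.1 (by simpa using hP)
    simp only [hu1, List.prod_nil, inv_one, one_mul]
    exact S.Qm.one_mem
  | cons s t ih =>
    intro hl u hu hP
    have hs := hl s (by simp)
    set j := S.vee u s with hj
    have hjd : j⁻¹ * S.Δ ∈ S.P := S.vee_le u s S.Δ hu.2 hs.2
    have hc : s⁻¹ * j ∈ S.Simples := by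
      refine ⟨S.le_vee_right u s, ?_⟩
      have := S.P.mul_mem hjd (S.conj_pos s hs.1)
      convert this using 1
      group
    have hd : u⁻¹ * j ∈ S.Simples := by
      refine ⟨S.le_vee_left u s, ?_⟩
      have := S.P.mul_mem hjd (S.conj_pos u hu.1)
      convert this using 1
      group
    have htp : t.prod ∈ S.P := S.prod_mem_P (fun a ha => hl a (by simp [ha]))
    have hjle : j⁻¹ * (s * t.prod) ∈ S.P := by
      refine S.vee_le u s (s * t.prod) ?_ ?_
      · have := hP
        rwa [List.prod_cons] at this
      · simpa [mul_assoc] using htp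
    have hcle : (s⁻¹ * j)⁻¹ * t.prod ∈ S.P := by
      convert hjle using 1
      group
    have hQ := ih (fun a ha => hl a (by simp [ha])) _ hc hcle
    have := S.Qm.mul_mem (Submonoid.subset_closure hd) hQ
    convert this using 1
    rw [List.prod_cons]
    group

lemma delta_compl_mem_Qm {q : G} (hq : q ∈ S.Qm) (h : S.Δ⁻¹ * q ∈ S.P) :
    S.Δ⁻¹ * q ∈ S.Qm := by
  obtain ⟨l, hl, rfl⟩ := Submonoid.exists_list_of_mem_closure hq
  cases l with
  | nil =>
    have hΔ : S.Δ = 1 := S.purity _ S.delta_mem (by simpa using h)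
    simp only [hΔ, List.prod_nil, inv_one, one_mul]
    exact S.Qm.one_mem
  | cons s t =>
    have hs := hl s (by simp)
    have hu : s⁻¹ * S.Δ ∈ S.Simples := S.compl_mem_simples hs
    have h2 : (s⁻¹ * S.Δ)⁻¹ * t.prod ∈ S.P := by
      convert h using 1
      rw [List.prod_cons]
      group
    have := S.simple_compl_mem_Qm t (fun a ha => hl a (by simp [ha])) _ hu h2
    convert this using 1
    rw [List.prod_cons]
    group

lemma P_le_Qm : S.P ≤ S.Qm := by
  have key : ∀ k : ℕ, ∀ a : G, a ∈ S.P → a * S.Δ ^ k ∈ S.Qm → a ∈ S.Qm := by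
    intro k
    induction k with
    | zero => intro a _ h; simpa using h
    | succ k ih =>
      intro a ha h
      have hta : S.Δ⁻¹ * a * S.Δ ∈ S.P := S.conj_pos a ha
      have hP : S.Δ⁻¹ * (a * S.Δ ^ (k + 1)) ∈ S.P := by
        have := S.P.mul_mem hta (S.pow_delta_mem k)
        convert this using 1
        rw [pow_succ']
        group
      have hQ := S.delta_compl_mem_Qm h hP
      have hQ' : (S.Δ⁻¹ * a * S.Δ) * S.Δ ^ k ∈ S.Qm := by
        convert hQ using 1
        rw [pow_succ']
        group
      have hmem := ih _ hta hQ'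
      have := S.psi_mem_Qm hmem
      convert this using 1
      group
  intro a ha
  obtain ⟨k, hk⟩ := S.exists_mul_delta_pow_mem_Qm a
  exact key k a ha hk

lemma psi_mem_P {a : G} (ha : a ∈ S.P) : S.Δ * a * S.Δ⁻¹ ∈ S.P :=
  S.Qm_le_P (S.psi_mem_Qm (S.P_le_Qm ha))

lemma conj_zpow_mem (m : ℤ) {a : G} (ha : a ∈ S.P) :
    S.Δ ^ m * a * (S.Δ ^ m)⁻¹ ∈ S.P := by
  induction m using Int.induction_on with
  | zero => simpa using ha
  | succ n ih =>
    have := S.psi_mem_P ih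
    convert this using 1
    group
  | pred n ih =>
    have := S.conj_pos _ ih
    convert this using 1
    group

lemma inf_inv_eq (x : G) : S.inf x⁻¹ = -S.sup x := by
  have h1 : -S.sup x ≤ S.inf x⁻¹ := by
    refine S.inf_max x⁻¹ _ ?_
    have := S.conj_zpow_mem (S.sup x) (S.le_sup x)
    convert this using 1
    group
  have h2 : S.sup x ≤ -S.inf x⁻¹ := by
    refine S.sup_min x _ ?_
    have := S.conj_zpow_mem (S.inf x⁻¹) (S.inf_le x⁻¹)
    convert this using 1
    group
  omega

end Aux

end Garside

open Garside in
theorem statement8 {G : Type*} [Group G] (S : Garside G) (x α : G)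
    (h1 : S.inf (α⁻¹ * x * α) ≤ S.inf x) (h2 : S.sup x ≤ S.sup (α⁻¹ * x * α))
    (hα : α ∈ S.P) : S.transport x α ∈ S.P := by
  show (S.pp x)⁻¹ * α * S.pp (α⁻¹ * x * α) ∈ S.P
  set y : G := α⁻¹ * x * α with hy
  have hppx_iota : (S.pp x)⁻¹ * S.iota x ∈ S.P := S.wedge_le_left _ _
  have hppx_iotainv : (S.pp x)⁻¹ * S.iota x⁻¹ ∈ S.P := S.wedge_le_right _ _
  have hiota_delta : ∀ z : G, (S.iota z)⁻¹ * S.Δ ∈ S.P := fun z => S.wedge_le_right _ _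
  have hiota_le : ∀ z : G, (S.iota z)⁻¹ * (z * S.Δ ^ (-S.inf z)) ∈ S.P :=
    fun z => S.wedge_le_left _ _
  have hppΔ : (S.pp x)⁻¹ * S.Δ ∈ S.P := S.mul_div_mem hppx_iota (hiota_delta x)
  have hA2 : (S.pp x)⁻¹ * (α * S.Δ) ∈ S.P := by
    have := S.P.mul_mem hppΔ (S.conj_pos α hα)
    convert this using 1
    group
  have hfacgen : ∀ p q : ℤ, q ≤ p → S.Δ ^ p * α * (S.Δ ^ q)⁻¹ ∈ S.P := by
    intro p q hpq
    have hA := S.conj_zpow_mem p hα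
    have hB : S.Δ ^ (p - q) ∈ S.P := S.zpow_delta_mem (by omega)
    have := S.P.mul_mem hA hB
    convert this using 1
    group
  -- main step, applied to (x, y) and (x⁻¹, y⁻¹)
  have main : ∀ z w : G, z * α = α * w → S.inf w ≤ S.inf z →
      (S.pp x)⁻¹ * S.iota z ∈ S.P → (S.pp x)⁻¹ * (α * S.iota w) ∈ S.P := by
    intro z w hzw hinf hppz
    have step1 : (S.pp x)⁻¹ * (z * S.Δ ^ (-S.inf z)) ∈ S.P :=
      S.mul_div_mem hppz (hiota_le z)
    have h3 := S.P.mul_mem step1 (hfacgen (S.inf z) (S.inf w) hinf)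
    have hA1 : (S.pp x)⁻¹ * (α * (w * S.Δ ^ (-S.inf w))) ∈ S.P := by
      have heq : (S.pp x)⁻¹ * (α * (w * S.Δ ^ (-S.inf w))) =
          (S.pp x)⁻¹ * (z * S.Δ ^ (-S.inf z)) *
            (S.Δ ^ (S.inf z) * α * (S.Δ ^ (S.inf w))⁻¹) := by
        rw [show α * (w * S.Δ ^ (-S.inf w)) = (α * w) * S.Δ ^ (-S.inf w) by group, ← hzw]
        group
      rw [heq]
      exact h3
    have hwedge := S.le_wedge (w * S.Δ ^ (-S.inf w)) S.Δ (α⁻¹ * S.pp x) ?_ ?_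
    · show (S.pp x)⁻¹ * (α * S.wedge (w * S.Δ ^ (-S.inf w)) S.Δ) ∈ S.P
      convert hwedge using 1
      group
    · convert hA1 using 1
      group
    · convert hA2 using 1
      group
  have hmain1 : (S.pp x)⁻¹ * (α * S.iota y) ∈ S.P := by
    refine main x y (by rw [hy]; group) h1 hppx_iota
  have hmain2 : (S.pp x)⁻¹ * (α * S.iota y⁻¹) ∈ S.P := by
    refine main x⁻¹ y⁻¹ (by rw [hy]; group) ?_ hppx_iotainv
    rw [S.inf_inv_eq, S.inf_inv_eq]
    omega
  have hfin := S.le_wedge (S.iota y) (S.iota y⁻¹) (α⁻¹ * S.pp x) ?_ ?_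
  · show (S.pp x)⁻¹ * α * S.pp y ∈ S.P
    convert hfin using 1
    show (S.pp x)⁻¹ * α * S.wedge (S.iota y) (S.iota y⁻¹) = _
    group
  · convert hmain1 using 1
    group
  · convert hmain2 using 1
    group

end GarsidePaper
end

section
/- Let G be a Garside group of finite type and x, α, β ∈ G such that inf(x^α) = inf(x^{α∧β}) = inf(x^β) and sup(x^α) = sup(x^{α∧β}) = sup(x^β). Then the transports at x satisfy (α ∧ β)^{(1)} = α^{(1)} ∧ β^{(1)}. -/
namespace GarsidePaper

namespace Garside

variable {G : Type*} [Group G]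

lemma le_refl' (S : Garside G) (a : G) : a⁻¹ * a ∈ S.P := by
  simp [one_mem]

lemma le_trans' (S : Garside G) {a b c : G} (h1 : a⁻¹ * b ∈ S.P) (h2 : b⁻¹ * c ∈ S.P) :
    a⁻¹ * c ∈ S.P := by
  have := mul_mem h1 h2
  rwa [show a⁻¹ * b * (b⁻¹ * c) = a⁻¹ * c by group] at this

lemma eq_of_le_le (S : Garside G) {a b : G} (h1 : a⁻¹ * b ∈ S.P) (h2 : b⁻¹ * a ∈ S.P) :
    a = b := by
  have h3 : a⁻¹ * b = 1 := S.purity _ h1 (by rwa [show (a⁻¹ * b)⁻¹ = b⁻¹ * a by group])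
  have := congrArg (a * ·) h3
  simpa [mul_assoc] using this.symm

lemma le_wedge_iff (S : Garside G) (d a b : G) :
    d⁻¹ * S.wedge a b ∈ S.P ↔ d⁻¹ * a ∈ S.P ∧ d⁻¹ * b ∈ S.P := by
  constructor
  · intro h
    exact ⟨S.le_trans' h (S.wedge_le_left a b), S.le_trans' h (S.wedge_le_right a b)⟩
  · intro h
    exact S.le_wedge a b d h.1 h.2

lemma wedge_eq (S : Garside G) {a b c : G} (h1 : c⁻¹ * a ∈ S.P) (h2 : c⁻¹ * b ∈ S.P)
    (h3 : ∀ d : G, d⁻¹ * a ∈ S.P → d⁻¹ * b ∈ S.P → d⁻¹ * c ∈ S.P) :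
    S.wedge a b = c :=
  S.eq_of_le_le (h3 _ (S.wedge_le_left a b) (S.wedge_le_right a b)) (S.le_wedge a b c h1 h2)

lemma mul_wedge (S : Garside G) (c a b : G) :
    c * S.wedge a b = S.wedge (c * a) (c * b) := by
  refine (S.wedge_eq ?_ ?_ ?_).symm
  · have := S.wedge_le_left a b
    rwa [show (S.wedge a b)⁻¹ * a = (c * S.wedge a b)⁻¹ * (c * a) by group] at this
  · have := S.wedge_le_right a b
    rwa [show (S.wedge a b)⁻¹ * b = (c * S.wedge a b)⁻¹ * (c * b) by group] at this
  · intro d hd1 hd2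
    have h1 : (c⁻¹ * d)⁻¹ * a ∈ S.P := by
      rwa [show d⁻¹ * (c * a) = (c⁻¹ * d)⁻¹ * a by group] at hd1
    have h2 : (c⁻¹ * d)⁻¹ * b ∈ S.P := by
      rwa [show d⁻¹ * (c * b) = (c⁻¹ * d)⁻¹ * b by group] at hd2
    have := S.le_wedge a b (c⁻¹ * d) h1 h2
    rwa [show (c⁻¹ * d)⁻¹ * S.wedge a b = d⁻¹ * (c * S.wedge a b) by group] at this

/-- Some positive power of `Δ` is central. -/
lemma deltaN_central (S : Garside G) :
    ∃ N : ℕ, 0 < N ∧ ∀ g : G, (S.Δ ^ N)⁻¹ * g * S.Δ ^ N = g := by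
  classical
  set Sig := {a : G | a ∈ S.P ∧ a⁻¹ * S.Δ ∈ S.P} with hSig
  set f : G → G := fun g => S.Δ⁻¹ * g * S.Δ with hf
  have hmaps : Set.MapsTo f Sig Sig := by
    rintro a ⟨h1, h2⟩
    refine ⟨S.conj_pos a h1, ?_⟩
    have := S.conj_pos _ h2
    rwa [show S.Δ⁻¹ * (a⁻¹ * S.Δ) * S.Δ = (f a)⁻¹ * S.Δ by simp only [hf]; group] at this
  have hinj : Set.InjOn f Sig := by
    intro u _ v _ h
    simp only [hf] at h
    exact mul_left_cancel (mul_right_cancel h)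
  have hbij : Set.BijOn f Sig Sig :=
    (S.simples_finite.injOn_iff_bijOn_of_mapsTo hmaps).mp hinj
  haveI : Finite ↥Sig := S.simples_finite.to_subtype
  let e : ↥Sig ≃ ↥Sig := hbij.equiv f
  have he : ∀ (a : ↥Sig), (e a : G) = f ↑a := fun a => rfl
  have hiter : ∀ (k : ℕ) (a : ↥Sig), ((e ^ k) a : G) = f^[k] ↑a := by
    intro k
    induction k with
    | zero => intro a; simp
    | succ n ih =>
        intro a
        rw [pow_succ, Equiv.Perm.mul_apply, ih, he, Function.iterate_succ_apply]
  set N := orderOf e with hN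
  have hNpos : 0 < N := orderOf_pos e
  have hfix : ∀ a ∈ Sig, f^[N] a = a := by
    intro a ha
    have := hiter N ⟨a, ha⟩
    rw [hN, pow_orderOf_eq_one, Equiv.Perm.coe_one, id_eq] at this
    rw [hN]
    exact this.symm
  have hform : ∀ (k : ℕ) (g : G), f^[k] g = (S.Δ ^ k)⁻¹ * g * S.Δ ^ k := by
    intro k
    induction k with
    | zero => intro g; simp
    | succ n ih =>
        intro g
        rw [Function.iterate_succ_apply', ih]
        simp only [hf, pow_succ]
        group
  refine ⟨N, hNpos, ?_⟩
  -- the fixed points of conjugation by Δ^N form a subgroup containing the simples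
  set φ : G →* G := (MulAut.conj ((S.Δ ^ N)⁻¹)).toMonoidHom with hφ
  have hφapp : ∀ g : G, φ g = (S.Δ ^ N)⁻¹ * g * S.Δ ^ N := by
    intro g
    simp only [hφ, MulEquiv.coe_toMonoidHom, MulAut.conj_apply, inv_inv]
  have hsub : Subgroup.closure Sig ≤ MonoidHom.eqLocus φ (MonoidHom.id G) := by
    apply (Subgroup.closure_le _).mpr
    intro s hs
    show φ s = s
    rw [hφapp, ← hform, hfix s hs]
  rw [S.simples_generate] at hsub
  intro g
  have : φ g = g := hsub (Subgroup.mem_top g)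
  rwa [hφapp] at this

lemma conj_pow_pos (S : Garside G) (n : ℕ) (a : G) (ha : a ∈ S.P) :
    (S.Δ ^ n)⁻¹ * a * S.Δ ^ n ∈ S.P := by
  induction n with
  | zero => simpa using ha
  | succ m ih =>
      have := S.conj_pos _ ih
      rwa [show S.Δ⁻¹ * ((S.Δ ^ m)⁻¹ * a * S.Δ ^ m) * S.Δ
            = (S.Δ ^ (m + 1))⁻¹ * a * S.Δ ^ (m + 1) by rw [pow_succ]; group] at this

lemma conj_inv_pos (S : Garside G) (a : G) (ha : a ∈ S.P) : S.Δ * a * S.Δ⁻¹ ∈ S.P := by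
  obtain ⟨N, hNpos, hc⟩ := S.deltaN_central
  obtain ⟨M, rfl⟩ : ∃ M, N = M + 1 := ⟨N - 1, by omega⟩
  have := S.conj_pow_pos M a ha
  rwa [show (S.Δ ^ M)⁻¹ * a * S.Δ ^ M
        = S.Δ * ((S.Δ ^ (M + 1))⁻¹ * a * S.Δ ^ (M + 1)) * S.Δ⁻¹ by rw [pow_succ]; group,
      hc a] at this

lemma conj_zpow_pos (S : Garside G) (k : ℤ) (a : G) (ha : a ∈ S.P) :
    (S.Δ ^ k)⁻¹ * a * S.Δ ^ k ∈ S.P := by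
  induction k using Int.induction_on with
  | zero => simpa using ha
  | succ i ih =>
      have := S.conj_pos _ ih
      rwa [show S.Δ⁻¹ * ((S.Δ ^ (i : ℤ))⁻¹ * a * S.Δ ^ (i : ℤ)) * S.Δ
            = (S.Δ ^ ((i : ℤ) + 1))⁻¹ * a * S.Δ ^ ((i : ℤ) + 1) by
              rw [zpow_add, zpow_one]; group] at this
  | pred i ih =>
      have := S.conj_inv_pos _ ih
      rwa [show S.Δ * ((S.Δ ^ (-(i : ℤ)))⁻¹ * a * S.Δ ^ (-(i : ℤ))) * S.Δ⁻¹
            = (S.Δ ^ (-(i : ℤ) - 1))⁻¹ * a * S.Δ ^ (-(i : ℤ) - 1) by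
              rw [zpow_sub, zpow_one]; group] at this

lemma wedge_mul_zpow (S : Garside G) (a b : G) (k : ℤ) :
    S.wedge (a * S.Δ ^ k) (b * S.Δ ^ k) = S.wedge a b * S.Δ ^ k := by
  apply S.wedge_eq
  · have := S.conj_zpow_pos k _ (S.wedge_le_left a b)
    rwa [show (S.Δ ^ k)⁻¹ * ((S.wedge a b)⁻¹ * a) * S.Δ ^ k
          = (S.wedge a b * S.Δ ^ k)⁻¹ * (a * S.Δ ^ k) by group] at this
  · have := S.conj_zpow_pos k _ (S.wedge_le_right a b)
    rwa [show (S.Δ ^ k)⁻¹ * ((S.wedge a b)⁻¹ * b) * S.Δ ^ k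
          = (S.wedge a b * S.Δ ^ k)⁻¹ * (b * S.Δ ^ k) by group] at this
  · intro d hd1 hd2
    have h1 : (d * S.Δ ^ (-k))⁻¹ * a ∈ S.P := by
      have := S.conj_zpow_pos (-k) _ hd1
      rwa [show (S.Δ ^ (-k))⁻¹ * (d⁻¹ * (a * S.Δ ^ k)) * S.Δ ^ (-k)
            = (d * S.Δ ^ (-k))⁻¹ * a by rw [zpow_neg]; group] at this
    have h2 : (d * S.Δ ^ (-k))⁻¹ * b ∈ S.P := by
      have := S.conj_zpow_pos (-k) _ hd2
      rwa [show (S.Δ ^ (-k))⁻¹ * (d⁻¹ * (b * S.Δ ^ k)) * S.Δ ^ (-k)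
            = (d * S.Δ ^ (-k))⁻¹ * b by rw [zpow_neg]; group] at this
    have := S.conj_zpow_pos k _ (S.le_wedge a b _ h1 h2)
    rwa [show (S.Δ ^ k)⁻¹ * ((d * S.Δ ^ (-k))⁻¹ * S.wedge a b) * S.Δ ^ k
          = d⁻¹ * (S.wedge a b * S.Δ ^ k) by rw [zpow_neg]; group] at this

lemma wedge_mul_delta (S : Garside G) (a b : G) :
    S.wedge (a * S.Δ) (b * S.Δ) = S.wedge a b * S.Δ := by
  have := S.wedge_mul_zpow a b 1
  simpa using this

lemma inf_inv (S : Garside G) (y : G) : S.inf y⁻¹ = -S.sup y := by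
  have h1 : -S.sup y ≤ S.inf y⁻¹ := by
    apply S.inf_max
    have := S.conj_zpow_pos (-S.sup y) _ (S.le_sup y)
    rwa [show (S.Δ ^ (-S.sup y))⁻¹ * (y⁻¹ * S.Δ ^ S.sup y) * S.Δ ^ (-S.sup y)
          = (S.Δ ^ (-S.sup y))⁻¹ * y⁻¹ by rw [zpow_neg]; group] at this
  have h2 : S.sup y ≤ -S.inf y⁻¹ := by
    apply S.sup_min
    have := S.conj_zpow_pos (-S.inf y⁻¹) _ (S.inf_le y⁻¹)
    rwa [show (S.Δ ^ (-S.inf y⁻¹))⁻¹ * ((S.Δ ^ S.inf y⁻¹)⁻¹ * y⁻¹) * S.Δ ^ (-S.inf y⁻¹)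
          = y⁻¹ * S.Δ ^ (-S.inf y⁻¹) by rw [zpow_neg]; group] at this
  omega

lemma mul_pp_conj (S : Garside G) (x γ : G) :
    γ * S.pp (γ⁻¹ * x * γ) =
      S.wedge
        (S.wedge (x * γ * S.Δ ^ (-S.inf (γ⁻¹ * x * γ))) (γ * S.Δ))
        (S.wedge (x⁻¹ * γ * S.Δ ^ (S.sup (γ⁻¹ * x * γ))) (γ * S.Δ)) := by
  unfold pp iota
  rw [S.inf_inv, neg_neg, S.mul_wedge, S.mul_wedge, S.mul_wedge]
  congr 2
  · group
  · group

lemma wedge3_reassoc (S : Garside G) (A A' B B' C C' : G) :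
    S.wedge (S.wedge (S.wedge A A') (S.wedge B B')) (S.wedge (S.wedge C C') (S.wedge B B'))
      = S.wedge (S.wedge (S.wedge A B) (S.wedge C B))
          (S.wedge (S.wedge A' B') (S.wedge C' B')) := by
  apply S.eq_of_le_le
  · have h := S.le_refl'
      (S.wedge (S.wedge (S.wedge A A') (S.wedge B B')) (S.wedge (S.wedge C C') (S.wedge B B')))
    simp only [S.le_wedge_iff] at h ⊢
    tauto
  · have h := S.le_refl'
      (S.wedge (S.wedge (S.wedge A B) (S.wedge C B)) (S.wedge (S.wedge A' B') (S.wedge C' B')))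
    simp only [S.le_wedge_iff] at h ⊢
    tauto

end Garside

open Garside in
theorem statement11 {G : Type*} [Group G] (S : Garside G) (x α β : G)
    (hi1 : S.inf (α⁻¹ * x * α) = S.inf ((S.wedge α β)⁻¹ * x * S.wedge α β))
    (hi2 : S.inf ((S.wedge α β)⁻¹ * x * S.wedge α β) = S.inf (β⁻¹ * x * β))
    (hs1 : S.sup (α⁻¹ * x * α) = S.sup ((S.wedge α β)⁻¹ * x * S.wedge α β))
    (hs2 : S.sup ((S.wedge α β)⁻¹ * x * S.wedge α β) = S.sup (β⁻¹ * x * β)) :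
    S.transport x (S.wedge α β) = S.wedge (S.transport x α) (S.transport x β) := by
  have hA := S.mul_pp_conj x α
  have hB := S.mul_pp_conj x β
  have hC := S.mul_pp_conj x (S.wedge α β)
  rw [hi1, hs1] at hA
  rw [← hi2, ← hs2] at hB
  have e1 : ∀ k : ℤ, x * S.wedge α β * S.Δ ^ k
      = S.wedge (x * α * S.Δ ^ k) (x * β * S.Δ ^ k) := fun k => by
    rw [S.mul_wedge x α β, ← S.wedge_mul_zpow]
  have e3 : ∀ k : ℤ, x⁻¹ * S.wedge α β * S.Δ ^ k
      = S.wedge (x⁻¹ * α * S.Δ ^ k) (x⁻¹ * β * S.Δ ^ k) := fun k => by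
    rw [S.mul_wedge x⁻¹ α β, ← S.wedge_mul_zpow]
  have e2 : S.wedge α β * S.Δ = S.wedge (α * S.Δ) (β * S.Δ) := (S.wedge_mul_delta α β).symm
  show (S.pp x)⁻¹ * S.wedge α β * S.pp ((S.wedge α β)⁻¹ * x * S.wedge α β)
      = S.wedge ((S.pp x)⁻¹ * α * S.pp (α⁻¹ * x * α)) ((S.pp x)⁻¹ * β * S.pp (β⁻¹ * x * β))
  rw [mul_assoc (S.pp x)⁻¹ (S.wedge α β) (S.pp ((S.wedge α β)⁻¹ * x * S.wedge α β)),
    mul_assoc (S.pp x)⁻¹ α (S.pp (α⁻¹ * x * α)), mul_assoc (S.pp x)⁻¹ β (S.pp (β⁻¹ * x * β)),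
    hC, hA, hB, e1, e2, e3, ← S.mul_wedge]
  congr 1
  exact S.wedge3_reassoc _ _ _ _ _ _

end GarsidePaper
end
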